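/- Define $P(x,y) = \prod_{1 \le i < j \le n} (y_i + y_j)(y_i + y_{2n+1-j})$ and let $w \in S_{2n}$ be a signed element corresponding to a signed permutation $\pi$ of $\{1,\ldots,n\}$. With the substitution $\rho(y_i) = X_i$, $\rho(y_{2n+1-i}) = -X_i$, one has $\rho(w \cdot P) = (-1)^{\ell(|\pi|)} \prod_{1 \le i < j \le n}(X_i + X_j)(X_i - X_j)$, where $\ell(|\pi|)$ is the inversion number of the underlying unsigned permutation. -/

import Mathlib

open MvPolynomial

/-- Embed `Fin n` into `Fin (2n)` (position `i` of the first half). -/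
def embHalf (n : ℕ) (a : Fin n) : Fin (2 * n) := ⟨a, by omega⟩

/-- The polynomial `P = ∏_{1 ≤ i < j ≤ n} (y_i + y_j)(y_i + y_{2n+1-j})` in the
variables `y_1,…,y_{2n}` (0-indexed: `y_{2n+1-j}` is the variable at `rev j`). -/
noncomputable def Ppoly (n : ℕ) : MvPolynomial (Fin (2 * n)) ℚ :=
  ∏ p ∈ (Finset.univ : Finset (Fin n × Fin n)).filter (fun p => p.1 < p.2),
    (X (embHalf n p.1) + X (embHalf n p.2)) *
      (X (embHalf n p.1) + X ((embHalf n p.2).rev))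

/-- The substitution `ρ` with `ρ(y_i) = X_i` and `ρ(y_{2n+1-i}) = -X_i`
for `1 ≤ i ≤ n`. -/
noncomputable def rhoSub (n : ℕ) :
    MvPolynomial (Fin (2 * n)) ℚ →ₐ[ℚ] MvPolynomial (Fin n) ℚ :=
  aeval (fun i : Fin (2 * n) =>
    if h : (i : ℕ) < n then X (⟨i, h⟩ : Fin n)
    else - X (⟨2 * n - 1 - (i : ℕ), by omega⟩ : Fin n))

/-- The inversion number (Coxeter length) of a permutation of `Fin n`. -/
def invCount {n : ℕ} (w : Equiv.Perm (Fin n)) : ℕ :=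
  ((Finset.univ : Finset (Fin n × Fin n)).filter
    (fun p => p.1 < p.2 ∧ w p.2 < w p.1)).card

/-- Reindexing an antisymmetric double product over `i < j` by a permutation
produces the sign `(-1)^{inversions}`. -/
lemma prod_perm_antisymm {n : ℕ} {R : Type*} [CommRing R] (σ : Equiv.Perm (Fin n))
    (F : Fin n → Fin n → R) (hF : ∀ a b, F b a = - F a b) :
    ∏ p ∈ (Finset.univ : Finset (Fin n × Fin n)).filter (fun p => p.1 < p.2),
        F (σ p.1) (σ p.2) =
      (-1 : R) ^ invCount σ *
        ∏ p ∈ (Finset.univ : Finset (Fin n × Fin n)).filter (fun p => p.1 < p.2),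
          F p.1 p.2 := by
  classical
  set s := (Finset.univ : Finset (Fin n × Fin n)).filter (fun p => p.1 < p.2) with hs
  have hne : ∀ p ∈ s, σ p.1 ≠ σ p.2 := by
    intro p hp
    have hlt : p.1 < p.2 := (Finset.mem_filter.mp hp).2
    exact fun hcon => absurd (σ.injective hcon) hlt.ne
  have step1 : ∀ p ∈ s, F (σ p.1) (σ p.2) =
      (if σ p.2 < σ p.1 then (-1 : R) else 1) *
        (if σ p.1 < σ p.2 then F (σ p.1) (σ p.2) else F (σ p.2) (σ p.1)) := by
    intro p hp
    rcases (hne p hp).lt_or_gt with h | h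
    · rw [if_neg (not_lt.mpr h.le), if_pos h, one_mul]
    · rw [if_pos h, if_neg (not_lt.mpr h.le), hF]
      ring
  rw [Finset.prod_congr rfl step1, Finset.prod_mul_distrib]
  congr 1
  · rw [Finset.prod_ite, Finset.prod_const, Finset.prod_const, one_pow, mul_one]
    congr 1
    rw [invCount, hs, Finset.filter_filter]
  · refine Finset.prod_nbij'
      (fun p => if σ p.1 < σ p.2 then (σ p.1, σ p.2) else (σ p.2, σ p.1))
      (fun p => if σ⁻¹ p.1 < σ⁻¹ p.2 then (σ⁻¹ p.1, σ⁻¹ p.2) else (σ⁻¹ p.2, σ⁻¹ p.1))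
      ?_ ?_ ?_ ?_ ?_
    · intro p hp
      rcases (hne p hp).lt_or_gt with h | h
      · rw [if_pos h]; exact Finset.mem_filter.mpr ⟨Finset.mem_univ _, h⟩
      · rw [if_neg (not_lt.mpr h.le)]; exact Finset.mem_filter.mpr ⟨Finset.mem_univ _, h⟩
    · intro p hp
      have hlt : p.1 < p.2 := (Finset.mem_filter.mp hp).2
      have hne' : σ⁻¹ p.1 ≠ σ⁻¹ p.2 := fun hcon =>
        absurd (σ⁻¹.injective hcon) hlt.ne
      rcases hne'.lt_or_gt with h | h
      · rw [if_pos h]; exact Finset.mem_filter.mpr ⟨Finset.mem_univ _, h⟩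
      · rw [if_neg (not_lt.mpr h.le)]; exact Finset.mem_filter.mpr ⟨Finset.mem_univ _, h⟩
    · intro p hp
      have hlt : p.1 < p.2 := (Finset.mem_filter.mp hp).2
      rcases (hne p hp).lt_or_gt with h | h
      · rw [if_pos h]
        simp [hlt]
      · rw [if_neg (not_lt.mpr h.le)]
        simp [not_lt.mpr hlt.le, hlt.asymm]
    · intro p hp
      have hlt : p.1 < p.2 := (Finset.mem_filter.mp hp).2
      have hne' : σ⁻¹ p.1 ≠ σ⁻¹ p.2 := fun hcon =>
        absurd (σ⁻¹.injective hcon) hlt.ne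
      rcases hne'.lt_or_gt with h | h
      · rw [if_pos h]
        simp [hlt]
      · rw [if_neg (not_lt.mpr h.le)]
        simp [not_lt.mpr hlt.le, hlt.asymm]
    · intro p hp
      rcases (hne p hp).lt_or_gt with h | h
      · rw [if_pos h, if_pos h]
      · rw [if_neg (not_lt.mpr h.le), if_neg (not_lt.mpr h.le)]

/-- If `w ∈ S_{2n}` is a signed element, corresponding to a signed
permutation `π` of `{1,…,n}` with underlying unsigned permutation `|π| = absw`,
then `ρ(w · P) = (-1)^{ℓ(|π|)} ∏_{1 ≤ i < j ≤ n} (X_i + X_j)(X_i - X_j)`. -/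
theorem stmt10 (n : ℕ) (w : Equiv.Perm (Fin (2 * n)))
    (hw : ∀ i : Fin (2 * n), w i.rev = (w i).rev)
    (absw : Equiv.Perm (Fin n))
    (habs : ∀ a : Fin n, (absw a : ℕ) =
      if ((w (embHalf n a)) : ℕ) < n then ((w (embHalf n a)) : ℕ)
      else 2 * n - 1 - ((w (embHalf n a)) : ℕ)) :
    rhoSub n (MvPolynomial.rename w (Ppoly n)) =
      (-1 : MvPolynomial (Fin n) ℚ) ^ invCount absw *
        ∏ p ∈ (Finset.univ : Finset (Fin n × Fin n)).filter (fun p => p.1 < p.2),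
          (X p.1 + X p.2) * (X p.1 - X p.2) := by
  classical
  have hA : ∀ v : Fin (2 * n), (rhoSub n) (X v.rev) = - (rhoSub n) (X v) := by
    intro v
    have hv : (v : ℕ) < 2 * n := v.isLt
    have hrev : ((v.rev) : ℕ) = 2 * n - 1 - (v : ℕ) := by
      rw [Fin.val_rev]; omega
    simp only [rhoSub, aeval_X]
    by_cases h : (v : ℕ) < n
    · rw [dif_pos h, dif_neg (by omega : ¬ ((v.rev : ℕ) < n))]
      have he : (⟨2 * n - 1 - (v.rev : ℕ), by omega⟩ : Fin n) = ⟨v, h⟩ := by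
        apply Fin.ext
        simp only [Fin.val_rev]
        omega
      rw [he]
    · rw [dif_neg h, dif_pos (by omega : ((v.rev : ℕ) < n)), neg_neg]
      have he : (⟨(v.rev : ℕ), by omega⟩ : Fin n) =
          ⟨2 * n - 1 - (v : ℕ), by omega⟩ := by
        apply Fin.ext
        simp only [Fin.val_rev]
        omega
      rw [he]
  have hB : ∀ a : Fin n, ((rhoSub n) (X (w (embHalf n a)))) ^ 2 =
      (X (absw a) : MvPolynomial (Fin n) ℚ) ^ 2 := by
    intro a
    simp only [rhoSub, aeval_X]
    by_cases h : ((w (embHalf n a) : ℕ)) < n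
    · rw [dif_pos h]
      congr 2
      exact Fin.ext (by rw [habs a, if_pos h])
    · rw [dif_neg h, neg_sq]
      congr 2
      exact Fin.ext (by rw [habs a, if_neg h])
  have key : rhoSub n (MvPolynomial.rename w (Ppoly n)) =
      ∏ p ∈ (Finset.univ : Finset (Fin n × Fin n)).filter (fun p => p.1 < p.2),
        ((X (absw p.1) : MvPolynomial (Fin n) ℚ) ^ 2 - (X (absw p.2)) ^ 2) := by
    rw [Ppoly]
    simp only [map_prod, map_mul, map_add, rename_X]
    refine Finset.prod_congr rfl ?_
    intro p _
    rw [hw, hA]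
    have : ∀ u v : MvPolynomial (Fin n) ℚ, (u + v) * (u + -v) = u ^ 2 - v ^ 2 := by
      intro u v; ring
    rw [this, hB p.1, hB p.2]
  rw [key, prod_perm_antisymm absw (fun a b => (X a : MvPolynomial (Fin n) ℚ) ^ 2 - X b ^ 2)
    (by intro a b; ring)]
  congr 1
  refine Finset.prod_congr rfl ?_
  intro p _
  ring
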